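/- arXiv:1505.00623 — 2 statements merged into one kernel-verified Lean document; each statement's English description precedes it below -/
import Mathlib

section
/- Let χ₁ be a nonprincipal Dirichlet character modulo a prime q and χ₂ a nonprincipal Dirichlet character modulo a distinct prime ℓ. Then there exists a prime p, different from q and ℓ, such that χ₁(p) ≠ χ₂(p). -/
theorem exists_prime_distinguishing_characters (q ℓ : ℕ) (hq : q.Prime) (hl : ℓ.Prime)
    (hne : q ≠ ℓ) (χ₁ : DirichletCharacter ℂ q) (hχ₁ : χ₁ ≠ 1)
    (χ₂ : DirichletCharacter ℂ ℓ) (hχ₂ : χ₂ ≠ 1) :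
    ∃ p : ℕ, p.Prime ∧ p ≠ q ∧ p ≠ ℓ ∧ χ₁ (p : ZMod q) ≠ χ₂ (p : ZMod ℓ) := by
  obtain ⟨a, ha⟩ := MulChar.ne_one_iff.mp hχ₂
  haveI : NeZero (q * ℓ) := ⟨Nat.mul_ne_zero hq.ne_zero hl.ne_zero⟩
  have hcop : Nat.Coprime q ℓ := (Nat.coprime_primes hq hl).mpr hne
  set e := ZMod.chineseRemainder hcop with he
  set b : ZMod (q * ℓ) := e.symm ((1 : ZMod q), (a : ZMod ℓ)) with hb
  have hub : IsUnit b := by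
    have h1 : IsUnit ((1 : ZMod q), (a : ZMod ℓ)) :=
      ⟨MulEquiv.prodUnits.symm (1, a), rfl⟩
    exact h1.map e.symm.toRingHom
  obtain ⟨p, hpgt, hp, hpb⟩ := Nat.forall_exists_prime_gt_and_eq_mod hub (max q ℓ)
  have hpq : p ≠ q := fun h => by simp [h] at hpgt
  have hpl : p ≠ ℓ := fun h => by simp [h] at hpgt
  have key : ((p : ZMod q), (p : ZMod ℓ)) = ((1 : ZMod q), (a : ZMod ℓ)) := by
    have := congrArg e hpb
    rw [hb, RingEquiv.apply_symm_apply] at this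
    rw [← this]
    have : e (p : ZMod (q * ℓ)) = ((p : ZMod q), (p : ZMod ℓ)) := map_natCast (e : ZMod (q*ℓ) →+* ZMod q × ZMod ℓ) p
    exact this.symm
  have h1 : (p : ZMod q) = 1 := (Prod.mk.injEq _ _ _ _ ▸ key).1
  have h2 : (p : ZMod ℓ) = (a : ZMod ℓ) := (Prod.mk.injEq _ _ _ _ ▸ key).2
  refine ⟨p, hp, hpq, hpl, ?_⟩
  rw [h1, h2, map_one]
  exact fun h => ha h.symm
end

section
/- Let χ₁, χ₂ be Dirichlet characters and P a prime, and define coefficients d_n by B(s,P) L(s,χ₁) = ∑_{n≥1} d_n n^{−s} where B(s,P) = ∏_{p≤P} (1 − χ₁(p)p^{−s})(1 − χ₂(p)p^{−s}). If n > 1 is divisible by p² for some prime p ≤ P, then d_n = 0. -/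
/-- Coefficients of the Euler factor `(1 - u p^{-s})(1 - v p^{-s})`. -/
def eulerFactorCoeff (u v : ℂ) (p : ℕ) : ArithmeticFunction ℂ :=
  ⟨fun n => if n = 0 then 0 else if n = 1 then 1 else if n = p then -(u + v)
      else if n = p ^ 2 then u * v else 0, rfl⟩

/-- Coefficients of `B(s,P) = ∏_{p ≤ P} (1 - χ₁(p)p^{-s})(1 - χ₂(p)p^{-s})`. -/
def bCoeff (χ₁ χ₂ : ℕ → ℂ) (P : ℕ) : ArithmeticFunction ℂ :=
  ∏ p ∈ (Finset.range (P + 1)).filter Nat.Prime, eulerFactorCoeff (χ₁ p) (χ₂ p) p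

/-- The coefficients of the Dirichlet series `L(s,χ) = ∑ χ(n) n^{-s}`. -/
def lCoeff (χ : ℕ → ℂ) : ArithmeticFunction ℂ :=
  ⟨fun n => if n = 0 then 0 else χ n, rfl⟩

lemma eulerFactorCoeff_apply (u v : ℂ) (p n : ℕ) :
    eulerFactorCoeff u v p n = if n = 0 then 0 else if n = 1 then 1 else if n = p then -(u + v)
      else if n = p ^ 2 then u * v else 0 := rfl

lemma lCoeff_apply (χ : ℕ → ℂ) (n : ℕ) : lCoeff χ n = if n = 0 then 0 else χ n := rfl

lemma eulerFactorCoeff_support {u v : ℂ} {p m : ℕ} (h : eulerFactorCoeff u v p m ≠ 0) :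
    m = 1 ∨ m = p ∨ m = p ^ 2 := by
  rw [eulerFactorCoeff_apply] at h
  by_contra hc
  push_neg at hc
  obtain ⟨h1, h2, h3⟩ := hc
  by_cases h0 : m = 0 <;> simp [h0, h1, h2, h3] at h

/-- Key lemma: the Euler factor at `p` times `L(s,χ)` has vanishing coefficients at
multiples of `p^2`, when `χ` is completely multiplicative and `u = χ p`. -/
lemma euler_mul_l_eq_zero {χ : ℕ → ℂ} (hχ : ∀ a b : ℕ, χ (a * b) = χ a * χ b)
    (v : ℂ) {p m : ℕ} (hp : p.Prime) (hdvd : p ^ 2 ∣ m) :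
    (eulerFactorCoeff (χ p) v p * lCoeff χ) m = 0 := by
  rcases eq_or_ne m 0 with rfl | hm0
  · simp
  obtain ⟨k, rfl⟩ := hdvd
  have hp1 : 1 < p := hp.one_lt
  have hp0 : p ≠ 0 := hp.ne_zero
  have hpne1 : p ≠ 1 := hp.ne_one
  have hppsq : p ≠ p ^ 2 := by nlinarith [sq_nonneg p]
  have hk0 : k ≠ 0 := by rintro rfl; simp at hm0
  rw [ArithmeticFunction.mul_apply]
  have hsub : ({(1, p ^ 2 * k), (p, p * k), (p ^ 2, k)} : Finset (ℕ × ℕ)) ⊆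
      (p ^ 2 * k).divisorsAntidiagonal := by
    intro x hx
    simp only [Finset.mem_insert, Finset.mem_singleton] at hx
    rcases hx with rfl | rfl | rfl <;>
      exact Nat.mem_divisorsAntidiagonal.mpr ⟨by ring, hm0⟩
  rw [← Finset.sum_subset hsub]
  · have h1 : ((1 : ℕ), p ^ 2 * k) ∉ ({(p, p * k), (p ^ 2, k)} : Finset (ℕ × ℕ)) := by
      simp only [Finset.mem_insert, Finset.mem_singleton, Prod.ext_iff, not_or]
      exact ⟨fun h => absurd h.1 hpne1.symm, fun h => absurd h.1 (by nlinarith : (1:ℕ) ≠ p ^ 2)⟩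
    have h2 : ((p : ℕ), p * k) ∉ ({(p ^ 2, k)} : Finset (ℕ × ℕ)) := by
      simp [Prod.ext_iff, hppsq]
    rw [Finset.sum_insert h1, Finset.sum_insert h2, Finset.sum_singleton]
    have e1 : eulerFactorCoeff (χ p) v p 1 = 1 := by
      simp [eulerFactorCoeff_apply]
    have e2 : eulerFactorCoeff (χ p) v p p = -(χ p + v) := by
      simp [eulerFactorCoeff_apply, hp0, hpne1, hppsq]
    have e3 : eulerFactorCoeff (χ p) v p (p ^ 2) = χ p * v := by
      have : p ^ 2 ≠ 0 := by positivity
      simp [eulerFactorCoeff_apply, this, (by nlinarith : p ^ 2 ≠ 1), hppsq.symm, hp0, hpne1]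
    have l1 : lCoeff χ (p ^ 2 * k) = χ p * (χ p * χ k) := by
      rw [lCoeff_apply, if_neg hm0, show p ^ 2 * k = p * (p * k) by ring, hχ, hχ]
    have l2 : lCoeff χ (p * k) = χ p * χ k := by
      rw [lCoeff_apply, if_neg (by positivity), hχ]
    have l3 : lCoeff χ k = χ k := by rw [lCoeff_apply, if_neg hk0]
    rw [e1, e2, e3, l1, l2, l3]
    ring
  · intro x hx hnx
    rcases eq_or_ne (eulerFactorCoeff (χ p) v p x.1) 0 with h | h
    · rw [h, zero_mul]
    exfalso
    apply hnx
    obtain ⟨hxe, -⟩ := Nat.mem_divisorsAntidiagonal.mp hx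
    have hx12 : x = (x.1, x.2) := rfl
    simp only [Finset.mem_insert, Finset.mem_singleton, Prod.ext_iff]
    rcases eulerFactorCoeff_support h with h1 | h1 | h1
    · exact Or.inl ⟨h1, by rw [h1, one_mul] at hxe; exact hxe⟩
    · refine Or.inr (Or.inl ⟨h1, ?_⟩)
      rw [h1] at hxe
      have : p * x.2 = p * (p * k) := by rw [hxe]; ring
      exact Nat.eq_of_mul_eq_mul_left hp.pos this
    · refine Or.inr (Or.inr ⟨h1, ?_⟩)
      rw [h1] at hxe
      exact Nat.eq_of_mul_eq_mul_left (by positivity : 0 < p ^ 2) hxe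

/-- The product of Euler factors at primes other than `p` is supported on
numbers coprime to `p`. -/
lemma prod_support {χ₁ χ₂ : ℕ → ℂ} {P p : ℕ} (hp : p.Prime) {m : ℕ}
    (h : (∏ q ∈ ((Finset.range (P + 1)).filter Nat.Prime).erase p,
        eulerFactorCoeff (χ₁ q) (χ₂ q) q) m ≠ 0) : ¬ p ∣ m := by
  have key := Finset.prod_induction (fun q' => eulerFactorCoeff (χ₁ q') (χ₂ q') q')
    (fun F : ArithmeticFunction ℂ => ∀ m : ℕ, F m ≠ 0 → ¬ p ∣ m) ?_ ?_ ?_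
    (s := ((Finset.range (P + 1)).filter Nat.Prime).erase p)
  · exact key m h
  · intro F G hF hG m hm
    rw [ArithmeticFunction.mul_apply] at hm
    obtain ⟨x, hx, hx0⟩ := Finset.exists_ne_zero_of_sum_ne_zero hm
    obtain ⟨hxe, -⟩ := Nat.mem_divisorsAntidiagonal.mp hx
    rw [← hxe]
    have h1 := hF _ (left_ne_zero_of_mul hx0)
    have h2 := hG _ (right_ne_zero_of_mul hx0)
    intro hd
    rcases (Nat.Prime.dvd_mul hp).mp hd with h | h
    exacts [h1 h, h2 h]
  · intro m hm hd
    rcases eq_or_ne m 0 with rfl | h0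
    · simp at hm
    have : m = 1 := by
      by_contra h1
      simp [ArithmeticFunction.one_apply, h1] at hm
    exact hp.one_lt.ne' (Nat.eq_one_of_dvd_one (this ▸ hd) ▸ rfl)
  · intro q hq m hm hd
    have hqmem := Finset.mem_erase.mp hq
    have hqp : q ≠ p := fun h => hqmem.1 h
    have hqprime : q.Prime := (Finset.mem_filter.mp hqmem.2).2
    rcases eulerFactorCoeff_support hm with h1 | h1 | h1 <;> subst h1
    · exact hp.one_lt.ne' (Nat.eq_one_of_dvd_one hd ▸ rfl)
    · exact hqp ((Nat.prime_dvd_prime_iff_eq hp hqprime).mp hd).symm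
    · have := hp.dvd_of_dvd_pow hd
      exact hqp ((Nat.prime_dvd_prime_iff_eq hp hqprime).mp this).symm

theorem dCoeff_eq_zero_of_sq_dvd {q ℓ : ℕ} (P : ℕ) (hP : P.Prime)
    (χ₁ : DirichletCharacter ℂ q) (χ₂ : DirichletCharacter ℂ ℓ) (n p : ℕ)
    (hn : 1 < n) (hp : p.Prime) (hpP : p ≤ P) (hdvd : p ^ 2 ∣ n) :
    (bCoeff (fun m => χ₁ (m : ZMod q)) (fun m => χ₂ (m : ZMod ℓ)) P *
        lCoeff (fun m => χ₁ (m : ZMod q))) n = 0 := by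
  set X₁ : ℕ → ℂ := fun m => χ₁ (m : ZMod q) with hX₁
  set X₂ : ℕ → ℂ := fun m => χ₂ (m : ZMod ℓ) with hX₂
  have hχ : ∀ a b : ℕ, X₁ (a * b) = X₁ a * X₁ b := by
    intro a b
    simp [hX₁, Nat.cast_mul, map_mul]
  have hpmem : p ∈ (Finset.range (P + 1)).filter Nat.Prime := by
    simp [Finset.mem_filter, Finset.mem_range, Nat.lt_succ_iff, hpP, hp]
  have hfact : bCoeff X₁ X₂ P = eulerFactorCoeff (X₁ p) (X₂ p) p *
      ∏ q' ∈ ((Finset.range (P + 1)).filter Nat.Prime).erase p,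
        eulerFactorCoeff (X₁ q') (X₂ q') q' := by
    rw [bCoeff, ← Finset.mul_prod_erase _ _ hpmem]
  rw [hfact, mul_comm (eulerFactorCoeff (X₁ p) (X₂ p) p) _, mul_assoc,
    ArithmeticFunction.mul_apply]
  refine Finset.sum_eq_zero fun x hx => ?_
  rcases eq_or_ne ((∏ q' ∈ ((Finset.range (P + 1)).filter Nat.Prime).erase p,
      eulerFactorCoeff (X₁ q') (X₂ q') q') x.1) 0 with h | h
  · rw [h, zero_mul]
  have hnd : ¬ p ∣ x.1 := prod_support hp h
  obtain ⟨hxe, -⟩ := Nat.mem_divisorsAntidiagonal.mp hx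
  have hcop : Nat.Coprime (p ^ 2) x.1 := Nat.Coprime.pow_left 2 (hp.coprime_iff_not_dvd.mpr hnd)
  have hdvd2 : p ^ 2 ∣ x.2 := hcop.dvd_of_dvd_mul_left (hxe ▸ hdvd)
  rw [euler_mul_l_eq_zero hχ (X₂ p) hp hdvd2, mul_zero]
end
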